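/- Define g : [0,1] → [0,1] by g(y) = 2y for 0 ≤ y < 1/2 and g(y) = 2(1 − y) for 1/2 ≤ y ≤ 1, and let g_l = g ∘ g ∘ ⋯ ∘ g denote the l-fold composition of g with itself. Then for every positive integer L and every x ∈ [0,1], |x² − (x − Σ_{l=1}^{L−1} 4^{−l} g_l(x))| ≤ 2^{−2L}. -/
import Mathlib

noncomputable section

/-- The tent map `g(y) = 2y` for `y < 1/2`, `g(y) = 2(1−y)` for `y ≥ 1/2`. -/
def tent (y : ℝ) : ℝ := if y < 1 / 2 then 2 * y else 2 * (1 - y)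

lemma tent_mem {x : ℝ} (hx : x ∈ Set.Icc (0 : ℝ) 1) : tent x ∈ Set.Icc (0 : ℝ) 1 := by
  obtain ⟨h0, h1⟩ := hx
  unfold tent
  split <;> constructor <;> linarith

lemma sum_shift (m : ℕ) (x : ℝ) :
    ∑ l ∈ Finset.Icc 1 (m + 1), (4 : ℝ) ^ (-(l : ℤ)) * tent^[l] x
      = (4 : ℝ)⁻¹ * tent x
        + (4 : ℝ)⁻¹ * ∑ l ∈ Finset.Icc 1 m, (4 : ℝ) ^ (-(l : ℤ)) * tent^[l] (tent x) := by
  have h : ∀ n : ℕ, ∀ y : ℝ, ∑ l ∈ Finset.Icc 1 n, (4 : ℝ) ^ (-(l : ℤ)) * tent^[l] y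
      = ∑ i ∈ Finset.range n, (4 : ℝ) ^ (-((i + 1 : ℕ) : ℤ)) * tent^[i + 1] y := by
    intro n y
    rw [show Finset.Icc 1 n = Finset.Ico 1 (n + 1) by rfl, Finset.sum_Ico_eq_sum_range]
    simp [add_comm]
  rw [h, h, Finset.sum_range_succ']
  have : ∀ i : ℕ, (4 : ℝ) ^ (-((i + 1 + 1 : ℕ) : ℤ)) * tent^[i + 1 + 1] x
      = (4 : ℝ)⁻¹ * ((4 : ℝ) ^ (-((i + 1 : ℕ) : ℤ)) * tent^[i + 1] (tent x)) := by
    intro i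
    rw [Function.iterate_succ_apply, ← mul_assoc]
    congr 1
    push_cast
    rw [← zpow_neg_one, ← zpow_add₀ (by norm_num : (4:ℝ) ≠ 0)]
    ring_nf
  rw [Finset.sum_congr rfl (fun i _ => this i), ← Finset.mul_sum]
  simp [Function.iterate_one]
  ring

lemma key (m : ℕ) : ∀ x ∈ Set.Icc (0 : ℝ) 1,
    |(x - ∑ l ∈ Finset.Icc 1 m, (4 : ℝ) ^ (-(l : ℤ)) * tent^[l] x) - x ^ 2|
      ≤ (4 : ℝ) ^ (-((m : ℤ) + 1)) := by
  induction m with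
  | zero =>
    intro x ⟨h0, h1⟩
    simp only [show Finset.Icc 1 0 = ∅ from rfl, Finset.sum_empty, sub_zero]
    rw [abs_le]
    norm_num
    constructor <;> nlinarith [sq_nonneg (x - 1/2)]
  | succ n ih =>
    intro x hx
    obtain ⟨h0, h1⟩ := hx
    rw [sum_shift]
    have hy := tent_mem ⟨h0, h1⟩
    have he := ih (tent x) hy
    set y := tent x with hyd
    set S := ∑ l ∈ Finset.Icc 1 n, (4 : ℝ) ^ (-(l : ℤ)) * tent^[l] y with hS
    have hid : x - y / 2 + y ^ 2 / 4 - x ^ 2 = 0 := by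
      rw [hyd]
      unfold tent
      split <;> ring
    have hexp : (x - ((4 : ℝ)⁻¹ * y + (4 : ℝ)⁻¹ * S)) - x ^ 2
        = ((y - S) - y ^ 2) / 4 + (x - y / 2 + y ^ 2 / 4 - x ^ 2) := by ring
    rw [hexp, hid, add_zero, abs_div, abs_of_nonneg (by norm_num : (0:ℝ) ≤ 4)]
    have : (4 : ℝ) ^ (-((n : ℤ) + 1 + 1)) = (4 : ℝ) ^ (-((n : ℤ) + 1)) / 4 := by
      rw [show -((n : ℤ) + 1 + 1) = -((n : ℤ) + 1) + (-1) by ring,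
        zpow_add₀ (by norm_num : (4:ℝ) ≠ 0)]
      norm_num
      ring
    push_cast
    rw [this]
    linarith [abs_nonneg ((y - S) - y ^ 2)]

theorem square_sawtooth_approx (L : ℕ) (hL : 0 < L) (x : ℝ) (hx : x ∈ Set.Icc (0 : ℝ) 1) :
    |x ^ 2 - (x - ∑ l ∈ Finset.Icc 1 (L - 1), (4 : ℝ) ^ (-(l : ℤ)) * tent^[l] x)|
      ≤ (2 : ℝ) ^ (-(2 * L : ℤ)) := by
  rw [abs_sub_comm]
  have h := key (L - 1) x hx
  have hL1 : ((L - 1 : ℕ) : ℤ) + 1 = (L : ℤ) := by omega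
  rw [hL1] at h
  calc _ ≤ (4 : ℝ) ^ (-(L : ℤ)) := h
    _ = (2 : ℝ) ^ (-(2 * L : ℤ)) := by
        rw [show (4 : ℝ) = (2:ℝ) ^ (2:ℤ) by norm_num, ← zpow_mul]
        ring_nf
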